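/- (Chvátal–Rödl–Szemerédi–Trotter, multicolor version) For all positive integers c and d there exists a constant C = C(c,d) such that the following holds: if G is a simple graph on n vertices with maximum degree at most d, then every coloring of the edges of the complete graph on C·n vertices with c colors contains a monochromatic copy of G. In particular, the multicolor Ramsey number satisfies R_c(G) ≤ C·n. -/

import Mathlib

namespace CRST

variable {ι : Type*} [DecidableEq ι]

lemma ramsey_seq (c : ℕ) (hc : 0 < c) : ∀ (m : ℕ) (S : Finset ι) (g : ι → ι → Fin c),
    (c+1)^m ≤ S.card →
    ∃ (f : Fin m → ι) (h : Fin m → Fin c), (∀ a, f a ∈ S) ∧ Function.Injective f ∧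
      ∀ a b : Fin m, a < b → g (f a) (f b) = h a := by
  intro m
  induction m with
  | zero =>
    intro S g _
    exact ⟨Fin.elim0, Fin.elim0, fun a => a.elim0, fun a => a.elim0, fun a => a.elim0⟩
  | succ m ih =>
    intro S g hS
    have hx : ∃ x, x ∈ S := by
      apply Finset.card_pos.mp
      calc 0 < (c+1)^(m+1) := by positivity
        _ ≤ S.card := hS
    obtain ⟨x, hxS⟩ := hx
    have hsum : (S.erase x).card = ∑ j : Fin c, ((S.erase x).filter (fun y => g x y = j)).card :=
      Finset.card_eq_sum_card_fiberwise (fun y _ => Finset.mem_univ _)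
    have hcls : ∃ j : Fin c, (c+1)^m ≤ ((S.erase x).filter (fun y => g x y = j)).card := by
      by_contra hcon
      push_neg at hcon
      have hle : (∑ j : Fin c, ((S.erase x).filter (fun y => g x y = j)).card) + c
          ≤ c * ((c+1)^m) := by
        have : ∑ j : Fin c, (((S.erase x).filter (fun y => g x y = j)).card + 1)
            ≤ ∑ _j : Fin c, (c+1)^m := by
          apply Finset.sum_le_sum
          intro j _
          exact hcon j
        simpa [Finset.sum_add_distrib, mul_comm] using this
      have hec : (S.erase x).card + 1 = S.card := Finset.card_erase_add_one hxS
      have h1 : (1:ℕ) ≤ (c+1)^m := Nat.one_le_pow _ _ (by omega)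
      have hpow : (c+1)^(m+1) = c * (c+1)^m + (c+1)^m := by ring
      linarith [hS, hsum, hec, hle, h1, hpow]
    obtain ⟨j, hj⟩ := hcls
    obtain ⟨f', h', hmem', hinj', hcol'⟩ := ih _ g hj
    refine ⟨Fin.cons x f', Fin.cons j h', ?_, ?_, ?_⟩
    · intro a
      induction a using Fin.cases with
      | zero => simpa using hxS
      | succ a =>
        have := hmem' a
        simp only [Fin.cons_succ]
        exact Finset.mem_of_mem_erase (Finset.mem_of_mem_filter _ this)
    · intro a b hab
      induction a using Fin.cases with
      | zero =>
        induction b using Fin.cases with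
        | zero => rfl
        | succ b =>
          exfalso
          have := hmem' b
          simp only [Fin.cons_zero, Fin.cons_succ] at hab
          rw [hab] at this
          exact (Finset.notMem_erase _ _) (Finset.mem_of_mem_filter _ this)
      | succ a =>
        induction b using Fin.cases with
        | zero =>
          exfalso
          have := hmem' a
          simp only [Fin.cons_zero, Fin.cons_succ] at hab
          rw [← hab] at this
          exact (Finset.notMem_erase _ _) (Finset.mem_of_mem_filter _ this)
        | succ b =>
          simp only [Fin.cons_succ] at hab
          rw [Fin.succ_inj.mpr (hinj' hab)]
    · intro a b hab
      induction a using Fin.cases with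
      | zero =>
        induction b using Fin.cases with
        | zero => exact absurd hab (lt_irrefl _)
        | succ b =>
          simp only [Fin.cons_zero, Fin.cons_succ]
          have := hmem' b
          exact (Finset.mem_filter.mp this).2
      | succ a =>
        induction b using Fin.cases with
        | zero => exact absurd hab (Fin.not_lt_zero _)
        | succ b =>
          simp only [Fin.cons_succ]
          exact hcol' a b (by exact_mod_cast Fin.succ_lt_succ_iff.mp hab)

lemma ramsey_clique (c t : ℕ) (g : Fin ((c+1)^(c*t+1)) → Fin ((c+1)^(c*t+1)) → Fin c)
    (hc : 0 < c) :
    ∃ (i : Fin c) (f : Fin (t+1) → Fin ((c+1)^(c*t+1))),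
      Function.Injective f ∧ ∀ a b, a < b → g (f a) (f b) = i := by
  obtain ⟨f, h, _, hinj, hcol⟩ := ramsey_seq c hc (c*t+1) Finset.univ g (by simp)
  have hpig : ∃ i : Fin c, t+1 ≤ (Finset.univ.filter (fun a => h a = i)).card := by
    by_contra hcon
    push_neg at hcon
    have hsum : (Finset.univ : Finset (Fin (c*t+1))).card
        = ∑ i : Fin c, (Finset.univ.filter (fun a => h a = i)).card :=
      Finset.card_eq_sum_card_fiberwise (fun y _ => Finset.mem_univ _)
    have hle : ∑ i : Fin c, (Finset.univ.filter (fun a => h a = i)).card ≤ ∑ _i : Fin c, t := by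
      apply Finset.sum_le_sum
      intro i _
      have := hcon i
      omega
    simp only [Finset.card_univ, Fintype.card_fin, Finset.sum_const, Finset.card_univ,
      smul_eq_mul] at hsum hle
    omega
  obtain ⟨i, hi⟩ := hpig
  set e := Finset.orderEmbOfCardLe _ hi with he
  refine ⟨i, fun a => f (e a), fun a b hab => ?_, fun a b hab => ?_⟩
  · exact e.injective (hinj hab)
  · have hmem : ∀ a, h (e a) = i := by
      intro a
      exact (Finset.mem_filter.mp (Finset.orderEmbOfCardLe_mem _ hi a)).2
    rw [hcol _ _ (e.strictMono hab), hmem a]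

section counting

variable {N c : ℕ} (χ : Sym2 (Fin N) → Fin c)

/-- number of `i`-colored edges from `a` into `B` -/
def dg (i : Fin c) (a : Fin N) (B : Finset (Fin N)) : ℕ :=
  ∑ b ∈ B, if a ≠ b ∧ χ s(a, b) = i then 1 else 0

/-- number of `i`-colored edges between `A` and `B` -/
def ecnt (i : Fin c) (A B : Finset (Fin N)) : ℕ :=
  ∑ a ∈ A, dg χ i a B

lemma dg_eq_card (i : Fin c) (a : Fin N) (B : Finset (Fin N)) :
    dg χ i a B = (B.filter (fun b => a ≠ b ∧ χ s(a, b) = i)).card :=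
  (Finset.card_filter _ _).symm

lemma dg_le_card (i : Fin c) (a : Fin N) (B : Finset (Fin N)) : dg χ i a B ≤ B.card := by
  rw [dg_eq_card]; exact Finset.card_filter_le _ _

lemma dg_mono (i : Fin c) (a : Fin N) {B B' : Finset (Fin N)} (h : B ⊆ B') :
    dg χ i a B ≤ dg χ i a B' := by
  apply Finset.sum_le_sum_of_subset_of_nonneg h
  intros; positivity

lemma ecnt_le (i : Fin c) (A B : Finset (Fin N)) : ecnt χ i A B ≤ A.card * B.card := by
  calc ecnt χ i A B ≤ ∑ _a ∈ A, B.card := Finset.sum_le_sum (fun a _ => dg_le_card χ i a B)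
    _ = A.card * B.card := by simp [mul_comm]

lemma ecnt_mono {A B A' B' : Finset (Fin N)} (i : Fin c) (hA : A ⊆ A') (hB : B ⊆ B') :
    ecnt χ i A B ≤ ecnt χ i A' B' := by
  calc ecnt χ i A B ≤ ∑ a ∈ A, dg χ i a B' := Finset.sum_le_sum (fun a _ => dg_mono χ i a hB)
    _ ≤ ecnt χ i A' B' := Finset.sum_le_sum_of_subset_of_nonneg hA (by intros; positivity)

lemma ecnt_comm (i : Fin c) (A B : Finset (Fin N)) : ecnt χ i A B = ecnt χ i B A := by
  unfold ecnt dg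
  rw [Finset.sum_comm]
  apply Finset.sum_congr rfl
  intro b _
  apply Finset.sum_congr rfl
  intro a _
  congr 1
  · simp only [eq_iff_iff]
    constructor
    · rintro ⟨h1, h2⟩; exact ⟨h1.symm, by rwa [Sym2.eq_swap]⟩
    · rintro ⟨h1, h2⟩; exact ⟨h1.symm, by rwa [Sym2.eq_swap]⟩

lemma ecnt_total {A B : Finset (Fin N)} (hd : Disjoint A B) :
    A.card * B.card ≤ ∑ i : Fin c, ecnt χ i A B := by
  unfold ecnt dg
  have : ∀ a ∈ A, (∑ b ∈ B, (1:ℕ)) ≤ ∑ b ∈ B, ∑ i : Fin c, if a ≠ b ∧ χ s(a, b) = i then 1 else 0 := by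
    intro a ha
    apply Finset.sum_le_sum
    intro b hb
    have hab : a ≠ b := by
      intro h; subst h
      exact (Finset.disjoint_left.mp hd ha) hb
    have : ∑ i : Fin c, (if a ≠ b ∧ χ s(a, b) = i then 1 else 0) = 1 := by
      simp only [ne_eq, hab, not_false_eq_true, true_and]
      rw [Finset.sum_ite_eq]
      simp
    omega
  calc A.card * B.card = ∑ _a ∈ A, ∑ _b ∈ B, (1:ℕ) := by simp [mul_comm]
    _ ≤ ∑ a ∈ A, ∑ b ∈ B, ∑ i : Fin c, if a ≠ b ∧ χ s(a, b) = i then 1 else 0 :=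
        Finset.sum_le_sum this
    _ = ∑ a ∈ A, ∑ i : Fin c, ∑ b ∈ B, if a ≠ b ∧ χ s(a, b) = i then 1 else 0 := by
        apply Finset.sum_congr rfl; intros; exact Finset.sum_comm
    _ = ∑ i : Fin c, ∑ a ∈ A, ∑ b ∈ B, if a ≠ b ∧ χ s(a, b) = i then 1 else 0 :=
        Finset.sum_comm
  
/-- `W₁`–`W₂` is hereditarily dense in color `i`: any pair of subsets comprising at least
a `1/Ep` fraction of each side spans at least a `1/Dp` fraction of possible `i`-edges. -/
def Dens (i : Fin c) (Ep Dp : ℕ) (W₁ W₂ : Finset (Fin N)) : Prop :=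
  ∀ A B : Finset (Fin N), A ⊆ W₁ → B ⊆ W₂ → W₁.card ≤ Ep * A.card → W₂.card ≤ Ep * B.card →
    A.card * B.card ≤ Dp * ecnt χ i A B

lemma Dens.symm {i : Fin c} {Ep Dp : ℕ} {W₁ W₂ : Finset (Fin N)}
    (h : Dens χ i Ep Dp W₁ W₂) : Dens χ i Ep Dp W₂ W₁ := by
  intro A B hA hB hcA hcB
  rw [mul_comm, ecnt_comm]
  exact h B A hB hA hcB hcA

end counting
section embed

variable {N c n d : ℕ} (χ : Sym2 (Fin N) → Fin c) (G : SimpleGraph (Fin n))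
  [DecidableRel G.Adj] (i : Fin c) (pc : Fin n → Fin (d+1)) (W : Fin (d+1) → Finset (Fin N))

/-- candidate set for vertex `u` after the first `t` vertices are embedded by `φ` -/
def Cand (φ : Fin n → Fin N) (t : ℕ) (u : Fin n) : Finset (Fin N) :=
  (W (pc u)).filter (fun x => ∀ v : Fin n, v.val < t → G.Adj v u → (φ v ≠ x ∧ χ s(φ v, x) = i))

/-- number of neighbours of `u` among the first `t` vertices -/
def bb (t : ℕ) (u : Fin n) : ℕ :=
  (Finset.univ.filter (fun v : Fin n => v.val < t ∧ G.Adj v u)).card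

lemma embed (hdeg : ∀ v : Fin n, (Finset.univ.filter (fun u => G.Adj u v)).card ≤ d)
    (D : ℕ) (hD : 1 ≤ D)
    (hdisj : ∀ p q, p ≠ q → Disjoint (W p) (W q))
    (hdens : ∀ p q, p ≠ q → Dens χ i ((2*D)^d*(2*d+2)) D (W p) (W q))
    (hsize : ∀ p, (2*D)^d*(2*d+2)*(n+1) ≤ (d+2) * (W p).card)
    (hpc : ∀ u v, G.Adj u v → pc u ≠ pc v) (hn : 0 < n) :
    ∃ φ : Fin n → Fin N, Function.Injective φ ∧ ∀ u v, G.Adj u v → χ s(φ u, φ v) = i := by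
  set E := (2*D)^d*(2*d+2) with hE
  have hE1 : 1 ≤ E := by
    have : 1 ≤ (2*D)^d := Nat.one_le_pow _ _ (by omega)
    calc 1 ≤ 1 * 1 := by omega
      _ ≤ (2*D)^d*(2*d+2) := Nat.mul_le_mul this (by omega)
  have hbb_le_d : ∀ (t : ℕ) (u : Fin n), bb G t u ≤ d := by
    intro t u
    apply le_trans _ (hdeg u)
    apply Finset.card_le_card
    intro v hv
    simp only [Finset.mem_filter, Finset.mem_univ, true_and] at hv ⊢
    exact hv.2
  have hpow_le : ∀ (t : ℕ) (u : Fin n), (2*D)^(bb G t u) ≤ (2*D)^d :=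
    fun t u => Nat.pow_le_pow_right (by omega) (hbb_le_d t u)
  -- the main induction
  have main : ∀ t, t ≤ n → ∃ φ : Fin n → Fin N,
      (∀ v : Fin n, v.val < t → φ v ∈ W (pc v)) ∧
      (∀ u v : Fin n, u.val < t → v.val < t → φ u = φ v → u = v) ∧
      (∀ u v : Fin n, u.val < t → v.val < t → G.Adj u v → χ s(φ u, φ v) = i) ∧
      (∀ u : Fin n, t ≤ u.val → (W (pc u)).card ≤ (2*D)^(bb G t u) * (Cand χ G i pc W φ t u).card) := by
    intro t
    induction t with
    | zero =>
      intro _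
      have hW0 : (W (pc ⟨0, hn⟩)).Nonempty := by
        rw [← Finset.card_pos]
        by_contra hcon
        have h0 : (W (pc ⟨0, hn⟩)).card = 0 := by omega
        have := hsize (pc ⟨0, hn⟩)
        rw [h0] at this
        simp at this
        omega
      obtain ⟨y, _⟩ := hW0
      refine ⟨fun _ => y, by omega, by omega, by omega, ?_⟩
      intro u _
      have hcand : Cand χ G i pc W (fun _ => y) 0 u = W (pc u) := by
        apply Finset.filter_true_of_mem
        intro x _ v hv
        omega
      rw [hcand]
      have hb : bb G 0 u = 0 := by
        unfold bb
        rw [Finset.card_eq_zero]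
        ext v
        simp
      rw [hb, pow_zero, one_mul]
    | succ t ih =>
      intro ht1
      obtain ⟨φ, hmem, hinj, hcol, hcand⟩ := ih (by omega)
      have ht : t < n := ht1
      set vt : Fin n := ⟨t, ht⟩ with hvt
      set C := Cand χ G i pc W φ t vt with hC
      set M := (W (pc vt)).card with hM
      have hM1 : 1 ≤ M := by
        by_contra hcon
        have := hsize (pc vt)
        rw [← hM] at this
        have : E * (n+1) ≤ (d+2) * M := this
        nlinarith
      -- the candidate set of the current vertex is large
      have hCbig : (2*d+2) * M ≤ E * C.card := by
        have h1 : M ≤ (2*D)^(bb G t vt) * C.card := hcand vt (le_refl _)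
        calc (2*d+2) * M ≤ (2*d+2) * ((2*D)^(bb G t vt) * C.card) := Nat.mul_le_mul_left _ h1
          _ ≤ (2*d+2) * ((2*D)^d * C.card) :=
              Nat.mul_le_mul_left _ (Nat.mul_le_mul_right _ (hpow_le t vt))
          _ = E * C.card := by rw [hE]; ring
      -- forward neighbours
      set F : Finset (Fin n) := Finset.univ.filter (fun u : Fin n => t+1 ≤ u.val ∧ G.Adj vt u)
        with hF
      have hFd : F.card ≤ d := by
        apply le_trans _ (hdeg vt)
        apply Finset.card_le_card
        intro v hv
        simp only [hF, Finset.mem_filter, Finset.mem_univ, true_and] at hv ⊢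
        exact G.adj_symm hv.2
      -- bad choices for a forward neighbour u
      set Bad : Fin n → Finset (Fin N) := fun u =>
        C.filter (fun x => ¬ ((Cand χ G i pc W φ t u).card ≤ 2*D*(dg χ i x (Cand χ G i pc W φ t u))))
        with hBad
      have hBadCard : ∀ u ∈ F, E * (Bad u).card ≤ M - 1 := by
        intro u hu
        simp only [hF, Finset.mem_filter, Finset.mem_univ, true_and] at hu
        obtain ⟨hut, huadj⟩ := hu
        by_contra hcon
        have hAM : M ≤ E * (Bad u).card := by omega
        have hpcne : pc vt ≠ pc u := hpc _ _ huadj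
        have hdWu : (W (pc u)).card ≤ E * (Cand χ G i pc W φ t u).card := by
          have h1 := hcand u (by omega)
          calc (W (pc u)).card ≤ (2*D)^(bb G t u) * (Cand χ G i pc W φ t u).card := h1
            _ ≤ (2*D)^d * (Cand χ G i pc W φ t u).card :=
                Nat.mul_le_mul_right _ (hpow_le t u)
            _ ≤ E * (Cand χ G i pc W φ t u).card := by
                apply Nat.mul_le_mul_right
                rw [hE]
                nlinarith [Nat.one_le_pow d (2*D) (show 0 < 2*D by omega)]
        have hBadsub : Bad u ⊆ W (pc vt) := by
          intro x hx
          have : x ∈ C := Finset.mem_of_mem_filter _ hx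
          rw [hC] at this
          exact Finset.mem_of_mem_filter _ this
        have hCusub : Cand χ G i pc W φ t u ⊆ W (pc u) := Finset.filter_subset _ _
        have hdens' := hdens _ _ hpcne (Bad u) (Cand χ G i pc W φ t u) hBadsub hCusub hAM hdWu
        -- each bad x has few i-neighbours in Cand u
        have hsmall : 2*D*(ecnt χ i (Bad u) (Cand χ G i pc W φ t u))
            ≤ (Bad u).card * ((Cand χ G i pc W φ t u).card - 1) := by
          unfold ecnt
          rw [Finset.mul_sum]
          calc ∑ x ∈ Bad u, 2*D*(dg χ i x (Cand χ G i pc W φ t u))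
              ≤ ∑ _x ∈ Bad u, ((Cand χ G i pc W φ t u).card - 1) := by
                apply Finset.sum_le_sum
                intro x hx
                have := (Finset.mem_filter.mp hx).2
                omega
            _ = (Bad u).card * ((Cand χ G i pc W φ t u).card - 1) := by
                rw [Finset.sum_const, smul_eq_mul]
        -- contradiction
        have hBpos : 0 < (Bad u).card := by
          by_contra hc0
          have : (Bad u).card = 0 := by omega
          rw [this] at hAM
          omega
        have hCupos : 0 < (Cand χ G i pc W φ t u).card := by
          have := hcand u (by omega)
          by_contra hc0
          have h0 : (Cand χ G i pc W φ t u).card = 0 := by omega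
          rw [h0, Nat.mul_zero] at this
          have hWu1 : 1 ≤ (W (pc u)).card := by
            have := hsize (pc u)
            nlinarith
          omega
        have hP : 0 < (Bad u).card * (Cand χ G i pc W φ t u).card :=
          Nat.mul_pos hBpos hCupos
        have hstep : 2 * ((Bad u).card * (Cand χ G i pc W φ t u).card)
            ≤ (Bad u).card * (Cand χ G i pc W φ t u).card := by
          calc 2 * ((Bad u).card * (Cand χ G i pc W φ t u).card)
              ≤ 2 * (D * ecnt χ i (Bad u) (Cand χ G i pc W φ t u)) :=
                Nat.mul_le_mul_left _ hdens'
            _ = 2 * D * ecnt χ i (Bad u) (Cand χ G i pc W φ t u) := by ring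
            _ ≤ (Bad u).card * ((Cand χ G i pc W φ t u).card - 1) := hsmall
            _ ≤ (Bad u).card * (Cand χ G i pc W φ t u).card :=
                Nat.mul_le_mul_left _ (by omega)
        omega
      -- the set of used vertices
      set used : Finset (Fin N) := (Finset.univ.filter (fun v : Fin n => v.val < t)).image φ
        with hused
      have husedcard : used.card ≤ n := by
        calc used.card ≤ (Finset.univ.filter (fun v : Fin n => v.val < t)).card :=
              Finset.card_image_le
          _ ≤ (Finset.univ : Finset (Fin n)).card := Finset.card_le_card (Finset.filter_subset _ _)
          _ = n := by simp
      set badAll := used ∪ F.biUnion Bad with hbadAll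
      have hbadcard : E * badAll.card < E * C.card := by
        have h1 : badAll.card ≤ used.card + ∑ u ∈ F, (Bad u).card :=
          le_trans (Finset.card_union_le _ _) (by gcongr; exact Finset.card_biUnion_le)
        have h2 : E * (∑ u ∈ F, (Bad u).card) ≤ d * (M - 1) := by
          rw [Finset.mul_sum]
          calc ∑ u ∈ F, E * (Bad u).card ≤ ∑ _u ∈ F, (M-1) :=
                Finset.sum_le_sum (fun u hu => hBadCard u hu)
            _ = F.card * (M-1) := by rw [Finset.sum_const, smul_eq_mul]
            _ ≤ d * (M-1) := Nat.mul_le_mul_right _ hFd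
        have h3 : E * badAll.card ≤ E * n + d * (M-1) := by
          calc E * badAll.card ≤ E * (used.card + ∑ u ∈ F, (Bad u).card) :=
                Nat.mul_le_mul_left _ h1
            _ = E * used.card + E * (∑ u ∈ F, (Bad u).card) := by ring
            _ ≤ E * n + d * (M-1) := by
                apply Nat.add_le_add _ h2
                exact Nat.mul_le_mul_left _ husedcard
        have h4 : E * n + d * (M - 1) < (2*d+2) * M := by
          have h5 := hsize (pc vt)
          rw [← hM] at h5
          have h6 : d*(M-1) ≤ d*M := Nat.mul_le_mul_left _ (by omega)
          have h7 : E*(n+1) = E*n + E := by ring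
          have h8 : (2*d+2)*M = d*M + (d+2)*M := by ring
          linarith [h5, h6, h7, h8, hE1]
        calc E * badAll.card ≤ E * n + d * (M-1) := h3
          _ < (2*d+2) * M := h4
          _ ≤ E * C.card := hCbig
      have hgood : (C \ badAll).Nonempty := by
        rw [← Finset.card_pos]
        have h1 : badAll.card < C.card := by
          by_contra hcon
          have : E * C.card ≤ E * badAll.card := Nat.mul_le_mul_left _ (by omega)
          omega
        have := Finset.le_card_sdiff badAll C
        omega
      obtain ⟨x, hx⟩ := hgood
      rw [Finset.mem_sdiff] at hx
      obtain ⟨hxC, hxbad⟩ := hx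
      have hxunused : x ∉ used := fun h => hxbad (Finset.mem_union_left _ h)
      have hxgoodnbr : ∀ u ∈ F,
          (Cand χ G i pc W φ t u).card ≤ 2*D*(dg χ i x (Cand χ G i pc W φ t u)) := by
        intro u hu
        by_contra hcon
        apply hxbad
        apply Finset.mem_union_right
        apply Finset.mem_biUnion.mpr
        exact ⟨u, hu, Finset.mem_filter.mpr ⟨hxC, by omega⟩⟩
      -- properties of x from membership in C
      have hxW : x ∈ W (pc vt) := Finset.mem_of_mem_filter _ (hC ▸ hxC)
      have hxprev : ∀ v : Fin n, v.val < t → G.Adj v vt → (φ v ≠ x ∧ χ s(φ v, x) = i) := by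
        have := (Finset.mem_filter.mp (hC ▸ hxC)).2
        exact this
      -- define the new embedding
      set φ' := Function.update φ vt x with hφ'
      have hφ'vt : φ' vt = x := Function.update_self _ _ _
      have hφ'old : ∀ v : Fin n, v.val < t → φ' v = φ v := by
        intro v hv
        apply Function.update_of_ne
        intro h
        rw [h] at hv
        simp [hvt] at hv
      have hlt_cases : ∀ v : Fin n, v.val < t + 1 → v.val < t ∨ v = vt := by
        intro v hv
        by_cases h : v.val < t
        · exact Or.inl h
        · right
          apply Fin.ext
          simp [hvt]
          omega
      refine ⟨φ', ?_, ?_, ?_, ?_⟩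
      · -- membership
        intro v hv
        rcases hlt_cases v hv with h | h
        · rw [hφ'old v h]; exact hmem v h
        · rw [h, hφ'vt]; exact hxW
      · -- injectivity
        intro u v hu hv heq
        rcases hlt_cases u hu with h1 | h1 <;> rcases hlt_cases v hv with h2 | h2
        · exact hinj u v h1 h2 (by rwa [hφ'old u h1, hφ'old v h2] at heq)
        · exfalso
          rw [hφ'old u h1, h2, hφ'vt] at heq
          exact hxunused (Finset.mem_image.mpr
            ⟨u, Finset.mem_filter.mpr ⟨Finset.mem_univ _, h1⟩, heq⟩)
        · exfalso
          rw [hφ'old v h2, h1, hφ'vt] at heq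
          exact hxunused (Finset.mem_image.mpr
            ⟨v, Finset.mem_filter.mpr ⟨Finset.mem_univ _, h2⟩, heq.symm⟩)
        · rw [h1, h2]
      · -- colours
        intro u v hu hv hadj
        rcases hlt_cases u hu with h1 | h1 <;> rcases hlt_cases v hv with h2 | h2
        · rw [hφ'old u h1, hφ'old v h2]
          exact hcol u v h1 h2 hadj
        · rw [hφ'old u h1, h2, hφ'vt]
          exact (hxprev u h1 (h2 ▸ hadj)).2
        · rw [hφ'old v h2, h1, hφ'vt, Sym2.eq_swap]
          exact (hxprev v h2 (h1 ▸ (G.adj_symm hadj))).2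
        · exfalso
          rw [h1, h2] at hadj
          exact G.irrefl hadj
      · -- candidate sets
        intro u hu
        have huvt : u ≠ vt := by
          intro h
          rw [h] at hu
          simp [hvt] at hu
        by_cases hadj : G.Adj vt u
        · have huF : u ∈ F := Finset.mem_filter.mpr ⟨Finset.mem_univ _, hu, hadj⟩
          have hnew : Cand χ G i pc W φ' (t+1) u
              = (Cand χ G i pc W φ t u).filter (fun y => x ≠ y ∧ χ s(x, y) = i) := by
            ext y
            simp only [Cand, Finset.mem_filter]
            constructor
            · rintro ⟨hyW, hall⟩
              refine ⟨⟨hyW, ?_⟩, ?_⟩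
              · intro v hv hvadj
                rw [← hφ'old v hv]
                exact hall v (by omega) hvadj
              · have := hall vt (by simp [hvt]) hadj
                rw [hφ'vt] at this
                exact this
            · rintro ⟨⟨hyW, hall⟩, hxy⟩
              refine ⟨hyW, ?_⟩
              intro v hv hvadj
              rcases hlt_cases v hv with h | h
              · rw [hφ'old v h]
                exact hall v h hvadj
              · rw [h, hφ'vt]
                exact hxy
          have hcard : (Cand χ G i pc W φ' (t+1) u).card = dg χ i x (Cand χ G i pc W φ t u) := by
            rw [hnew, dg_eq_card]
          have hbbnew : bb G (t+1) u = bb G t u + 1 := by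
            unfold bb
            have : Finset.univ.filter (fun v : Fin n => v.val < t+1 ∧ G.Adj v u)
                = insert vt (Finset.univ.filter (fun v : Fin n => v.val < t ∧ G.Adj v u)) := by
              ext v
              simp only [Finset.mem_filter, Finset.mem_univ, true_and, Finset.mem_insert]
              constructor
              · rintro ⟨hv, hvadj⟩
                rcases hlt_cases v hv with h | h
                · exact Or.inr ⟨h, hvadj⟩
                · exact Or.inl h
              · rintro (h | ⟨hv, hvadj⟩)
                · rw [h]
                  exact ⟨by simp [hvt], hadj⟩
                · exact ⟨by omega, hvadj⟩
            rw [this, Finset.card_insert_of_notMem]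
            simp only [Finset.mem_filter, Finset.mem_univ, true_and, not_and]
            intro hvt'
            exact absurd hvt' (lt_irrefl _)
          rw [hcard, hbbnew]
          calc (W (pc u)).card ≤ (2*D)^(bb G t u) * (Cand χ G i pc W φ t u).card :=
                hcand u (by omega)
            _ ≤ (2*D)^(bb G t u) * (2*D*(dg χ i x (Cand χ G i pc W φ t u))) :=
                Nat.mul_le_mul_left _ (hxgoodnbr u huF)
            _ = (2*D)^(bb G t u + 1) * dg χ i x (Cand χ G i pc W φ t u) := by ring
        · have hnew : Cand χ G i pc W φ' (t+1) u = Cand χ G i pc W φ t u := by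
            ext y
            simp only [Cand, Finset.mem_filter]
            constructor
            · rintro ⟨hyW, hall⟩
              refine ⟨hyW, ?_⟩
              intro v hv hvadj
              rw [← hφ'old v hv]
              exact hall v (by omega) hvadj
            · rintro ⟨hyW, hall⟩
              refine ⟨hyW, ?_⟩
              intro v hv hvadj
              rcases hlt_cases v hv with h | h
              · rw [hφ'old v h]
                exact hall v h hvadj
              · exfalso
                rw [h] at hvadj
                exact hadj hvadj
          have hbbnew : bb G (t+1) u = bb G t u := by
            unfold bb
            congr 1
            ext v
            simp only [Finset.mem_filter, Finset.mem_univ, true_and]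
            constructor
            · rintro ⟨hv, hvadj⟩
              refine ⟨?_, hvadj⟩
              rcases hlt_cases v hv with h | h
              · exact h
              · exfalso
                rw [h] at hvadj
                exact hadj hvadj
            · rintro ⟨hv, hvadj⟩
              exact ⟨by omega, hvadj⟩
          rw [hnew, hbbnew]
          exact hcand u (by omega)
  obtain ⟨φ, _, hinj, hcol, _⟩ := main n (le_refl n)
  refine ⟨φ, ?_, ?_⟩
  · intro u v heq
    exact hinj u v u.isLt v.isLt heq
  · intro u v hadj
    exact hcol u v u.isLt v.isLt hadj

end embed

section sparsify

/-- auxiliary: the `E`-constant as a function of the `G`-constant value -/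
def Estep (c d g : ℕ) : ℕ := (2*(4*c*g))^d*(2*d+2)

/-- tower-type constants for the sparsification argument -/
def Gk (c d : ℕ) : ℕ → ℕ
  | 0 => 1
  | r+1 => Gk c d r * (2 * Estep c d (Gk c d r))

def Dk (c d r : ℕ) : ℕ := 4*c*Gk c d (r-1)

def Ek (c d r : ℕ) : ℕ := (2*Dk c d r)^d*(2*d+2)

variable {c d : ℕ}

lemma Estep_pos (hc : 1 ≤ c) {g : ℕ} (hg : 1 ≤ g) : 1 ≤ Estep c d g := by
  unfold Estep
  have hcg : 0 < c*g := Nat.mul_pos (by omega) (by omega)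
  have h : 1 ≤ (2*(4*c*g))^d := Nat.one_le_pow _ _ (by nlinarith [hcg])
  calc 1 = 1*1 := by ring
    _ ≤ (2*(4*c*g))^d*(2*d+2) := Nat.mul_le_mul h (by omega)

lemma Gk_pos (hc : 1 ≤ c) (r : ℕ) : 1 ≤ Gk c d r := by
  induction r with
  | zero => simp [Gk]
  | succ r ih =>
    have h1 : 1 ≤ Estep c d (Gk c d r) := Estep_pos hc ih
    calc 1 = 1*(2*1) - 1 := by ring_nf
      _ ≤ Gk c d r * (2 * Estep c d (Gk c d r)) := by
          have := Nat.mul_le_mul ih (by omega : 2*1 ≤ 2 * Estep c d (Gk c d r))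
          omega
      _ = Gk c d (r+1) := rfl

lemma Dk_pos (hc : 1 ≤ c) (r : ℕ) : 1 ≤ Dk c d r := by
  unfold Dk
  have := Gk_pos (d := d) hc (r-1)
  nlinarith

lemma Ek_pos (hc : 1 ≤ c) (r : ℕ) : 1 ≤ Ek c d r := by
  unfold Ek
  have h : 1 ≤ (2*Dk c d r)^d := Nat.one_le_pow _ _ (by have := Dk_pos (d := d) hc r; omega)
  calc 1 = 1*1 := by ring
    _ ≤ (2*Dk c d r)^d*(2*d+2) := Nat.mul_le_mul h (by omega)

lemma Gk_mono (hc : 1 ≤ c) : Monotone (Gk c d) := by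
  apply monotone_nat_of_le_succ
  intro r
  have h1 : 1 ≤ Estep c d (Gk c d r) := Estep_pos hc (Gk_pos hc r)
  have h2 : Gk c d r * 1 ≤ Gk c d r * (2 * Estep c d (Gk c d r)) :=
    Nat.mul_le_mul_left _ (by omega)
  calc Gk c d r = Gk c d r * 1 := by ring
    _ ≤ Gk c d r * (2 * Estep c d (Gk c d r)) := h2
    _ = Gk c d (r+1) := rfl

lemma Gk_pred {m : ℕ} (hm : 1 ≤ m) : Gk c d m = Gk c d (m-1) * (2 * Ek c d m) := by
  obtain ⟨s, rfl⟩ : ∃ s, m = s + 1 := ⟨m - 1, by omega⟩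
  have h : Ek c d (s+1) = Estep c d (Gk c d s) := by
    unfold Ek Dk Estep
    simp
  rw [h]
  rfl

lemma sparsify {N : ℕ} (K Nk : ℕ) (hc : 1 ≤ c) (hNk : 1 ≤ Nk) (χ : Sym2 (Fin N) → Fin c) :
    ∀ (m : ℕ) (U : Fin K → Finset (Fin N)) (T : Finset (Fin c × Fin K × Fin K)),
    (c*K*K+1) - T.card = m →
    (∀ p q, p ≠ q → Disjoint (U p) (U q)) →
    (∀ p, Nk * Gk c d m ≤ (U p).card * Gk c d (c*K*K+1)) →
    (∀ j p q, (j,(p,q)) ∈ T → p ≠ q ∧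
      ∀ a ∈ U p, 2*c*(Gk c d m)*(dg χ j a (U q)) ≤ (U q).card) →
    ∃ r', 1 ≤ r' ∧ r' ≤ c*K*K+1 ∧ ∃ U' : Fin K → Finset (Fin N),
      (∀ p q, p ≠ q → Disjoint (U' p) (U' q)) ∧
      (∀ p, Nk ≤ (U' p).card * Gk c d (c*K*K+1)) ∧
      (∀ p q, p ≠ q → ∃ j, Dens χ j (Ek c d r') (Dk c d r') (U' p) (U' q)) := by
  intro m
  induction m using Nat.strong_induction_on with
  | _ m ih =>
  intro U T hm hdisj hsz hmk
  have hTcard : T.card ≤ c*K*K := by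
    calc T.card ≤ Fintype.card (Fin c × Fin K × Fin K) := Finset.card_le_univ T
      _ = c*K*K := by simp [mul_assoc]
  have hm1 : 1 ≤ m := by omega
  have hGm : 1 ≤ Gk c d m := Gk_pos hc m
  have hGm1 : 1 ≤ Gk c d (m-1) := Gk_pos hc (m-1)
  have hGR : 1 ≤ Gk c d (c*K*K+1) := Gk_pos hc _
  have hUpos : ∀ p, 1 ≤ (U p).card := by
    intro p
    have h1 := hsz p
    by_contra hcon
    have h0 : (U p).card = 0 := by omega
    rw [h0, Nat.zero_mul] at h1
    have h2 : 1 ≤ Nk * Gk c d m := by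
      have := Nat.mul_le_mul hNk hGm
      omega
    omega
  by_cases hterm : ∀ j p q, p ≠ q → (j,(p,q)) ∉ T →
      Dens χ j (Ek c d m) (Dk c d m) (U p) (U q)
  · -- terminate
    refine ⟨m, hm1, by omega, U, hdisj, ?_, ?_⟩
    · intro p
      calc Nk = Nk * 1 := by ring
        _ ≤ Nk * Gk c d m := Nat.mul_le_mul_left _ hGm
        _ ≤ (U p).card * Gk c d (c*K*K+1) := hsz p
    · intro p q hpq
      by_cases hall : ∃ j, (j,(p,q)) ∉ T
      · obtain ⟨j, hj⟩ := hall
        exact ⟨j, hterm j p q hpq hj⟩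
      · exfalso
        push_neg at hall
        have hper : ∀ j : Fin c, 2*c*(Gk c d m) * ecnt χ j (U p) (U q)
            ≤ (U p).card * (U q).card := by
          intro j
          have hj := (hmk j p q (hall j)).2
          unfold ecnt
          rw [Finset.mul_sum]
          calc ∑ a ∈ U p, 2*c*(Gk c d m)*(dg χ j a (U q))
              ≤ ∑ _a ∈ U p, (U q).card := Finset.sum_le_sum hj
            _ = (U p).card * (U q).card := by rw [Finset.sum_const, smul_eq_mul]
        have htot := ecnt_total χ (hdisj p q hpq)
        have hsumall : 2*c*(Gk c d m) * ((U p).card * (U q).card)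
            ≤ c * ((U p).card * (U q).card) := by
          calc 2*c*(Gk c d m) * ((U p).card * (U q).card)
              ≤ 2*c*(Gk c d m) * (∑ j : Fin c, ecnt χ j (U p) (U q)) :=
                Nat.mul_le_mul_left _ htot
            _ = ∑ j : Fin c, 2*c*(Gk c d m) * ecnt χ j (U p) (U q) := Finset.mul_sum _ _ _
            _ ≤ ∑ _j : Fin c, (U p).card * (U q).card := Finset.sum_le_sum (fun j _ => hper j)
            _ = c * ((U p).card * (U q).card) := by simp [Finset.sum_const, mul_comm]
        have hPpos : 0 < (U p).card * (U q).card := by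
          have := Nat.mul_le_mul (hUpos p) (hUpos q)
          omega
        have h2c : 2*c*(Gk c d m) ≤ c := Nat.le_of_mul_le_mul_right hsumall hPpos
        have h2c' : 2*c*1 ≤ 2*c*(Gk c d m) := Nat.mul_le_mul_left _ hGm
        omega
  · -- refine one pair
    push_neg at hterm
    obtain ⟨j, p, q, hpq, hnotT, hnd⟩ := hterm
    rw [Dens] at hnd
    push_neg at hnd
    obtain ⟨A, B, hAsub, hBsub, hAth, hBth, hlt⟩ := hnd
    set Er := Ek c d m with hEr
    have hEr1 : 1 ≤ Er := Ek_pos hc m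
    have hGpred : Gk c d m = Gk c d (m-1) * (2 * Er) := Gk_pred hm1
    have hApos : 0 < A.card := by
      by_contra hcon
      have h0 : A.card = 0 := by omega
      rw [h0, Nat.mul_zero] at hAth
      have := hUpos p
      omega
    have hBpos : 0 < B.card := by
      by_contra hcon
      have h0 : B.card = 0 := by omega
      rw [h0, Nat.mul_zero] at hBth
      have := hUpos q
      omega
    -- Markov pruning
    set A' := A.filter (fun a => A.card * dg χ j a B ≤ 2 * ecnt χ j A B) with hA'def
    have hA'sub : A' ⊆ A := Finset.filter_subset _ _
    have hA'big : A.card ≤ 2 * A'.card := by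
      by_contra hcon
      push_neg at hcon
      set S := A \ A' with hSdef
      have hScard : S.card = A.card - A'.card := Finset.card_sdiff_of_subset hA'sub
      have hS2 : A.card + 1 ≤ 2 * S.card := by
        have := Finset.card_le_card hA'sub
        omega
      have h1 : S.card * (2 * ecnt χ j A B + 1) ≤ ∑ a ∈ S, A.card * dg χ j a B := by
        calc S.card * (2 * ecnt χ j A B + 1) = ∑ _a ∈ S, (2 * ecnt χ j A B + 1) := by
              rw [Finset.sum_const, smul_eq_mul]
          _ ≤ ∑ a ∈ S, A.card * dg χ j a B := by
              apply Finset.sum_le_sum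
              intro a ha
              rw [hSdef, Finset.mem_sdiff] at ha
              obtain ⟨haA, haA'⟩ := ha
              have : ¬ (A.card * dg χ j a B ≤ 2 * ecnt χ j A B) := by
                intro hcc
                exact haA' (Finset.mem_filter.mpr ⟨haA, hcc⟩)
              omega
      have h2 : ∑ a ∈ S, A.card * dg χ j a B ≤ A.card * ecnt χ j A B := by
        rw [← Finset.mul_sum]
        apply Nat.mul_le_mul_left
        apply Finset.sum_le_sum_of_subset_of_nonneg (by rw [hSdef]; exact Finset.sdiff_subset)
        intros; positivity
      have h3 : (A.card + 1) * (2 * ecnt χ j A B + 1) ≤ 2*S.card * (2 * ecnt χ j A B + 1) :=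
        Nat.mul_le_mul_right _ hS2
      have h4 : 2*S.card * (2 * ecnt χ j A B + 1) ≤ 2 * (A.card * ecnt χ j A B) := by
        calc 2*S.card * (2 * ecnt χ j A B + 1) = 2*(S.card * (2 * ecnt χ j A B + 1)) := by ring
          _ ≤ 2 * (A.card * ecnt χ j A B) := by
              apply Nat.mul_le_mul_left
              exact le_trans h1 h2
      have hexp : (A.card + 1) * (2 * ecnt χ j A B + 1)
          = 2 * (A.card * ecnt χ j A B) + A.card + 2 * ecnt χ j A B + 1 := by ring
      omega
    -- degree bound on the pruned set
    have hdegA' : ∀ a ∈ A', 2*c*(Gk c d (m-1)) * dg χ j a B ≤ B.card := by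
      intro a ha
      have hfa : A.card * dg χ j a B ≤ 2 * ecnt χ j A B := (Finset.mem_filter.mp ha).2
      have hchain : A.card * (Dk c d m * dg χ j a B) < A.card * (2 * B.card) := by
        calc A.card * (Dk c d m * dg χ j a B) = Dk c d m * (A.card * dg χ j a B) := by ring
          _ ≤ Dk c d m * (2 * ecnt χ j A B) := Nat.mul_le_mul_left _ hfa
          _ = 2 * (Dk c d m * ecnt χ j A B) := by ring
          _ < 2 * (A.card * B.card) := by omega
          _ = A.card * (2 * B.card) := by ring
      have hlt2 : Dk c d m * dg χ j a B < 2 * B.card := Nat.lt_of_mul_lt_mul_left hchain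
      have hDk : Dk c d m * dg χ j a B = 2 * (2*c*(Gk c d (m-1)) * dg χ j a B) := by
        unfold Dk
        ring
      omega
    -- new families
    set U' : Fin K → Finset (Fin N) := Function.update (Function.update U p A') q B with hU'def
    have hU'p : U' p = A' := by
      rw [hU'def, Function.update_of_ne hpq, Function.update_self]
    have hU'q : U' q = B := by
      rw [hU'def, Function.update_self]
    have hU'other : ∀ x, x ≠ p → x ≠ q → U' x = U x := by
      intro x hxp hxq
      rw [hU'def, Function.update_of_ne hxq, Function.update_of_ne hxp]
    have hsub : ∀ x, U' x ⊆ U x := by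
      intro x
      by_cases hxq : x = q
      · rw [hxq, hU'q]; exact hBsub
      · by_cases hxp : x = p
        · rw [hxp, hU'p]; exact le_trans hA'sub hAsub
        · rw [hU'other x hxp hxq]
    -- reduced-size bounds for the two touched parts
    have hsizep : (U p).card ≤ 2*Er * (U' p).card := by
      rw [hU'p]
      calc (U p).card ≤ Er * A.card := hAth
        _ ≤ Er * (2 * A'.card) := Nat.mul_le_mul_left _ hA'big
        _ = 2*Er * A'.card := by ring
    have hsizeq : (U q).card ≤ 2*Er * (U' q).card := by
      rw [hU'q]
      calc (U q).card ≤ Er * B.card := hBth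
        _ ≤ 2*Er * B.card := Nat.mul_le_mul_right _ (by omega)
    have hsizeother : ∀ x, (U x).card ≤ 2*Er * (U' x).card := by
      intro x
      by_cases hxq : x = q
      · rw [hxq]; exact hsizeq
      · by_cases hxp : x = p
        · rw [hxp]; exact hsizep
        · rw [hU'other x hxp hxq]
          calc (U x).card = 1 * (U x).card := by ring
            _ ≤ 2*Er * (U x).card := Nat.mul_le_mul_right _ (by omega)
    -- key transfer lemma for degree bounds
    have hkey : ∀ (j' : Fin c) (a : Fin N) (X UU : Finset (Fin N)), X ⊆ UU →
        UU.card ≤ 2*Er * X.card →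
        2*c*(Gk c d m) * dg χ j' a UU ≤ UU.card →
        2*c*(Gk c d (m-1)) * dg χ j' a X ≤ X.card := by
      intro j' a X UU hXU hUX hddg
      have hchain : (2*Er) * (2*c*(Gk c d (m-1)) * dg χ j' a X) ≤ (2*Er) * X.card := by
        calc (2*Er) * (2*c*(Gk c d (m-1)) * dg χ j' a X)
            = 2*c*(Gk c d (m-1) * (2*Er)) * dg χ j' a X := by ring
          _ = 2*c*(Gk c d m) * dg χ j' a X := by rw [← hGpred]
          _ ≤ 2*c*(Gk c d m) * dg χ j' a UU := Nat.mul_le_mul_left _ (dg_mono χ j' a hXU)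
          _ ≤ UU.card := hddg
          _ ≤ (2*Er) * X.card := hUX
      exact Nat.le_of_mul_le_mul_left hchain (by omega)
    -- set up recursion
    set T' := insert (j,(p,q)) T with hT'def
    have hT'card : T'.card = T.card + 1 := Finset.card_insert_of_notMem hnotT
    refine ih (m-1) (by omega) U' T' (by omega) ?_ ?_ ?_
    · intro p' q' hpq'
      exact Finset.disjoint_of_subset_left (hsub p')
        (Finset.disjoint_of_subset_right (hsub q') (hdisj p' q' hpq'))
    · intro x
      have hcore : (2*Er) * (Nk * Gk c d (m-1)) ≤ (2*Er) * ((U' x).card * Gk c d (c*K*K+1)) := by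
        calc (2*Er) * (Nk * Gk c d (m-1)) = Nk * (Gk c d (m-1) * (2*Er)) := by ring
          _ = Nk * Gk c d m := by rw [← hGpred]
          _ ≤ (U x).card * Gk c d (c*K*K+1) := hsz x
          _ ≤ (2*Er * (U' x).card) * Gk c d (c*K*K+1) :=
              Nat.mul_le_mul_right _ (hsizeother x)
          _ = (2*Er) * ((U' x).card * Gk c d (c*K*K+1)) := by ring
      exact Nat.le_of_mul_le_mul_left hcore (by omega)
    · intro j' p' q' hmem'
      rw [hT'def, Finset.mem_insert] at hmem'
      rcases hmem' with hnew | hold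
      · -- the new mark
        have hj' : j' = j := by
          injection hnew with h1 h2
        have hp' : p' = p ∧ q' = q := by
          injection hnew with h1 h2
          injection h2 with h3 h4
          exact ⟨h3, h4⟩
        obtain ⟨hp'', hq''⟩ := hp'
        subst hj'
        subst hp''
        subst hq''
        refine ⟨hpq, ?_⟩
        intro a ha
        rw [hU'p] at ha
        rw [hU'q]
        exact hdegA' a ha
      · obtain ⟨hpq'', hdeg''⟩ := hmk j' p' q' hold
        refine ⟨hpq'', ?_⟩
        intro a ha
        exact hkey j' a (U' q') (U q') (hsub q') (hsizeother q')
          (hdeg'' a (hsub p' ha))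

end sparsify

section coloring

lemma greedy_coloring {n d : ℕ} (G : SimpleGraph (Fin n)) [DecidableRel G.Adj]
    (hdeg : ∀ v : Fin n, (Finset.univ.filter (fun u => G.Adj u v)).card ≤ d) :
    ∃ pc : Fin n → Fin (d+1), ∀ u v, G.Adj u v → pc u ≠ pc v := by
  have main : ∀ t, t ≤ n → ∃ pc : Fin n → Fin (d+1),
      ∀ u v : Fin n, u.val < t → v.val < t → G.Adj u v → pc u ≠ pc v := by
    intro t
    induction t with
    | zero => exact fun _ => ⟨fun _ => ⟨0, by omega⟩,
        fun u v h1 _ _ => absurd h1 (Nat.not_lt_zero _)⟩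
    | succ t ih =>
      intro ht1
      obtain ⟨pc, hpc⟩ := ih (by omega)
      have ht : t < n := ht1
      set vt : Fin n := ⟨t, ht⟩ with hvt
      set bad := (Finset.univ.filter (fun v : Fin n => v.val < t ∧ G.Adj v vt)).image pc
        with hbad
      have hbadcard : bad.card < d+1 := by
        have h1 : bad.card ≤ (Finset.univ.filter (fun v : Fin n => v.val < t ∧ G.Adj v vt)).card :=
          Finset.card_image_le
        have h2 : (Finset.univ.filter (fun v : Fin n => v.val < t ∧ G.Adj v vt)).card
            ≤ (Finset.univ.filter (fun u : Fin n => G.Adj u vt)).card := by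
          apply Finset.card_le_card
          intro v hv
          simp only [Finset.mem_filter, Finset.mem_univ, true_and] at hv ⊢
          exact hv.2
        have := hdeg vt
        omega
      have hjc : (Finset.univ \ bad).Nonempty := by
        rw [← Finset.card_pos, Finset.card_sdiff_of_subset (Finset.subset_univ bad)]
        simp only [Finset.card_univ, Fintype.card_fin]
        omega
      obtain ⟨jc, hjcmem⟩ := hjc
      have hjcbad : jc ∉ bad := (Finset.mem_sdiff.mp hjcmem).2
      set pc' := Function.update pc vt jc with hpc'
      have hold : ∀ v : Fin n, v.val < t → pc' v = pc v := by
        intro v hv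
        apply Function.update_of_ne
        intro h
        rw [h] at hv
        simp [hvt] at hv
      have hnewv : pc' vt = jc := Function.update_self _ _ _
      refine ⟨pc', ?_⟩
      intro u v hu hv hadj
      have hcases : ∀ w : Fin n, w.val < t + 1 → w.val < t ∨ w = vt := by
        intro w hw
        by_cases h : w.val < t
        · exact Or.inl h
        · right; apply Fin.ext; simp [hvt]; omega
      rcases hcases u hu with h1 | h1 <;> rcases hcases v hv with h2 | h2
      · rw [hold u h1, hold v h2]; exact hpc u v h1 h2 hadj
      · rw [hold u h1, h2, hnewv]
        intro heq
        apply hjcbad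
        rw [← heq]
        exact Finset.mem_image.mpr ⟨u, Finset.mem_filter.mpr
          ⟨Finset.mem_univ _, h1, h2 ▸ hadj⟩, rfl⟩
      · rw [hold v h2, h1, hnewv]
        intro heq
        apply hjcbad
        rw [heq]
        exact Finset.mem_image.mpr ⟨v, Finset.mem_filter.mpr
          ⟨Finset.mem_univ _, h2, G.adj_symm (h1 ▸ hadj)⟩, rfl⟩
      · exfalso; rw [h1, h2] at hadj; exact G.irrefl hadj
  obtain ⟨pc, hpc⟩ := main n (le_refl n)
  exact ⟨pc, fun u v hadj => hpc u v u.isLt v.isLt hadj⟩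

end coloring

section monotone

variable {c d : ℕ}

lemma Dk_mono (hc : 1 ≤ c) : Monotone (Dk c d) := by
  intro r s hrs
  unfold Dk
  exact Nat.mul_le_mul_left _ (Gk_mono hc (by omega))

lemma Ek_mono (hc : 1 ≤ c) : Monotone (Ek c d) := by
  intro r s hrs
  unfold Ek
  apply Nat.mul_le_mul_right
  exact Nat.pow_le_pow_left (by have := Dk_mono (d := d) hc hrs; omega) _

end monotone

end CRST

/-- Chvátal–Rödl–Szemerédi–Trotter, multicolor version: for all positive integers
`c` and `d` there is a constant `C` such that for every graph `G` on `n` vertices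
with maximum degree at most `d`, every `c`-coloring of the edges of the complete
graph on `C·n` vertices contains a monochromatic copy of `G`; i.e. `R_c(G) ≤ C·n`. -/
theorem CRST_multicolor (c d : ℕ) (hc : 0 < c) (hd : 0 < d) :
    ∃ C : ℕ, ∀ (n : ℕ) (G : SimpleGraph (Fin n)),
      (∀ v : Fin n, (G.neighborSet v).ncard ≤ d) →
      ∀ χ : Sym2 (Fin (C * n)) → Fin c,
        ∃ (i : Fin c) (φ : Fin n → Fin (C * n)),
          Function.Injective φ ∧ ∀ u v, G.Adj u v → χ s(φ u, φ v) = i := by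
  classical
  open CRST in
  set K := (c+1)^(c*d+1) with hK
  set R := c*K*K+1 with hR
  set Q := 2*(Gk c d R)*(Ek c d R) with hQ
  refine ⟨K*Q, ?_⟩
  intro n G hdeg χ
  have hK1 : 1 ≤ K := Nat.one_le_pow _ _ (by omega)
  have hGR : 1 ≤ Gk c d R := Gk_pos hc R
  have hER : 1 ≤ Ek c d R := Ek_pos hc R
  have hQ1 : 1 ≤ Q := by
    rw [hQ]
    nlinarith
  rcases Nat.eq_zero_or_pos n with hn | hn
  · subst hn
    refine ⟨⟨0, hc⟩, fun v => v.elim0, fun v => v.elim0, fun v => v.elim0⟩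
  -- setup
  have hdeg' : ∀ v : Fin n, (Finset.univ.filter (fun u => G.Adj u v)).card ≤ d := by
    intro v
    have h1 : (Finset.univ.filter (fun u => G.Adj u v)) = (G.neighborSet v).toFinset := by
      ext u
      simp [SimpleGraph.mem_neighborSet, G.adj_comm]
    rw [h1, ← Set.ncard_eq_toFinset_card']
    exact hdeg v
  -- initial partition of Fin N into K residue classes
  set U0 : Fin K → Finset (Fin (K*Q*n)) := fun p =>
    Finset.univ.filter (fun v : Fin (K*Q*n) => v.val % K = p.val) with hU0
  have hNpos : 0 < K*Q*n := by
    have : 1*1*1 ≤ K*Q*n := Nat.mul_le_mul (Nat.mul_le_mul hK1 hQ1) hn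
    omega
  have hU0card : ∀ p, Q*n ≤ (U0 p).card := by
    intro p
    have hinj : Set.InjOn
        (fun t : ℕ => (⟨(p.val + K*t) % (K*Q*n), Nat.mod_lt _ hNpos⟩ : Fin (K*Q*n)))
        (Finset.range (Q*n)) := by
      intro a ha b hb hab
      simp only [Finset.coe_range, Set.mem_Iio] at ha hb
      have hma : p.val + K*a < K*Q*n := by
        have h1 : p.val + 1 ≤ K := p.isLt
        have h2 : K*a + K ≤ K*(Q*n) := by
          rw [← Nat.mul_succ]
          exact Nat.mul_le_mul_left _ (by omega)
        have h3 : K*(Q*n) = K*Q*n := by ring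
        omega
      have hmb : p.val + K*b < K*Q*n := by
        have h1 : p.val + 1 ≤ K := p.isLt
        have h2 : K*b + K ≤ K*(Q*n) := by
          rw [← Nat.mul_succ]
          exact Nat.mul_le_mul_left _ (by omega)
        have h3 : K*(Q*n) = K*Q*n := by ring
        omega
      have := Fin.mk.injEq _ _ _ _ ▸ hab
      simp only [Fin.mk.injEq, Nat.mod_eq_of_lt hma, Nat.mod_eq_of_lt hmb] at hab
      have : K*a = K*b := by omega
      exact Nat.eq_of_mul_eq_mul_left (by omega) this
    have hmaps : ∀ t ∈ Finset.range (Q*n),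
        (⟨(p.val + K*t) % (K*Q*n), Nat.mod_lt _ hNpos⟩ : Fin (K*Q*n)) ∈ U0 p := by
      intro t htr
      rw [Finset.mem_range] at htr
      have hma : p.val + K*t < K*Q*n := by
        have h1 : p.val + 1 ≤ K := p.isLt
        have h2 : K*t + K ≤ K*(Q*n) := by
          rw [← Nat.mul_succ]
          exact Nat.mul_le_mul_left _ (by omega)
        have h3 : K*(Q*n) = K*Q*n := by ring
        omega
      rw [hU0]
      simp only [Finset.mem_filter, Finset.mem_univ, true_and]
      rw [Nat.mod_eq_of_lt hma]
      rw [Nat.add_mul_mod_self_left]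
      exact Nat.mod_eq_of_lt p.isLt
    calc Q*n = (Finset.range (Q*n)).card := by rw [Finset.card_range]
      _ ≤ (U0 p).card := Finset.card_le_card_of_injOn _ hmaps hinj
  have hU0disj : ∀ p q : Fin K, p ≠ q → Disjoint (U0 p) (U0 q) := by
    intro p q hpq
    rw [Finset.disjoint_left]
    intro v hv hv'
    rw [hU0] at hv hv'
    simp only [Finset.mem_filter, Finset.mem_univ, true_and] at hv hv'
    exact hpq (Fin.ext (hv ▸ hv'))
  -- run the sparsification
  have hNk1 : 1 ≤ Q*n := Nat.mul_le_mul hQ1 hn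
  obtain ⟨r', hr'1, hr'R, U', hU'disj, hU'sz, hU'dens⟩ :=
    sparsify (d := d) K (Q*n) hc hNk1 χ R U0 ∅ (by simp [hR]) hU0disj
      (by
        intro p
        exact Nat.mul_le_mul_right _ (hU0card p))
      (by simp)
  -- Ramsey selection of d+1 parts that are pairwise dense in one fixed color
  have hchoice : ∀ p q : Fin K, ∃ j : Fin c,
      p ≠ q → Dens χ j (Ek c d r') (Dk c d r') (U' p) (U' q) := by
    intro p q
    by_cases hpq : p = q
    · exact ⟨⟨0, hc⟩, fun h => absurd hpq h⟩
    · obtain ⟨j, hj⟩ := hU'dens p q hpq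
      exact ⟨j, fun _ => hj⟩
  set g : Fin K → Fin K → Fin c := fun p q => (hchoice p q).choose with hg
  obtain ⟨i, f, hfinj, hfmono⟩ := ramsey_clique c d g hc
  set W : Fin (d+1) → Finset (Fin (K*Q*n)) := fun a => U' (f a) with hW
  have hWdisj : ∀ a b : Fin (d+1), a ≠ b → Disjoint (W a) (W b) := by
    intro a b hab
    exact hU'disj _ _ (fun h => hab (hfinj h))
  have hWdens : ∀ a b : Fin (d+1), a ≠ b →
      Dens χ i (Ek c d r') (Dk c d r') (W a) (W b) := by
    intro a b hab
    rcases lt_or_gt_of_ne hab with h | h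
    · have := hfmono a b h
      have hspec := (hchoice (f a) (f b)).choose_spec (fun heq => hab (hfinj heq))
      have hgi : (hchoice (f a) (f b)).choose = i := this
      rw [hgi] at hspec
      exact hspec
    · have := hfmono b a h
      have hspec := (hchoice (f b) (f a)).choose_spec (fun heq => hab (hfinj heq.symm))
      have hgi : (hchoice (f b) (f a)).choose = i := this
      rw [hgi] at hspec
      exact hspec.symm
  -- size bound for the selected parts
  have hWsize : ∀ a : Fin (d+1), (2*(Dk c d r'))^d*(2*d+2)*(n+1) ≤ (d+2) * (W a).card := by
    intro a
    have h1 : Q*n ≤ (U' (f a)).card * Gk c d R := hU'sz (f a)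
    have h2 : 2*(Ek c d R)*n ≤ (U' (f a)).card := by
      have h3 : (Gk c d R) * (2*(Ek c d R)*n) ≤ (Gk c d R) * (U' (f a)).card := by
        calc (Gk c d R) * (2*(Ek c d R)*n) = Q*n := by rw [hQ]; ring
          _ ≤ (U' (f a)).card * Gk c d R := h1
          _ = (Gk c d R) * (U' (f a)).card := by ring
      exact Nat.le_of_mul_le_mul_left h3 (by omega)
    have hEmono : Ek c d r' ≤ Ek c d R := Ek_mono hc hr'R
    have hEeq : (2*(Dk c d r'))^d*(2*d+2) = Ek c d r' := rfl
    rw [hEeq]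
    calc Ek c d r' * (n+1) ≤ Ek c d R * (n+1) := Nat.mul_le_mul_right _ hEmono
      _ ≤ Ek c d R * (2*n) := Nat.mul_le_mul_left _ (by omega)
      _ = 2*(Ek c d R)*n := by ring
      _ ≤ (U' (f a)).card := h2
      _ = (W a).card := by rw [hW]
      _ ≤ (d+2) * (W a).card := by
          have : 1 * (W a).card ≤ (d+2) * (W a).card := Nat.mul_le_mul_right _ (by omega)
          omega
  -- proper coloring of G
  obtain ⟨pc, hpc⟩ := greedy_coloring G hdeg'
  -- embed
  obtain ⟨φ, hφinj, hφcol⟩ := embed χ G i pc W hdeg' (Dk c d r') (Dk_pos hc r')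
    hWdisj (fun p q hpq => hWdens p q hpq) hWsize hpc hn
  exact ⟨i, φ, hφinj, hφcol⟩
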